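/- Let k be an algebraically closed field and I a finite type. Let M denote the category of I-graded finite-dimensional k-vector spaces, i.e. families (V_i)_{i ∈ I} of finite-dimensional k-vector spaces with componentwise linear maps, and for i ∈ I let x_i ∈ M be the simple object with value k in degree i and 0 elsewhere. Then there is an equivalence of categories Quiv_I ≃ (End_k(M))^{op}, where End_k(M) is the category of k-linear functors M → M and natural transformations; it sends a k-linear endofunctor R to the quiver Q(R) with Q(R)(i, j) = Hom_M(R(x_i), x_j)^∗ and, in the other direction, a quiver Q to the endofunctor R(Q) with R(Q)(x_i) = ⊕_{j ∈ I} Q(i, j) ⊗_k x_j. -/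

import Mathlib

/-!
Statement 16: for an algebraically closed field `k` and a finite type `I`, there is an
equivalence of categories `Quiv_I ≃ (End_k(M))^op`, where `M` is the category of `I`-graded
finite-dimensional `k`-vector spaces, sending a `k`-linear endofunctor `R` to the quiver
`Q(R)(i,j) = Hom_M(R(x_i), x_j)^∗` and a quiver `Q` to an endofunctor `R(Q)` with
`R(Q)(x_i) = ⊕_j Q(i,j) ⊗_k x_j`.
-/

open CategoryTheory

universe u

variable (k : Type u) [Field k] (I : Type u) [Fintype I] [DecidableEq I]

/-- The category `M` of `I`-graded finite-dimensional `k`-vector spaces. -/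
abbrev GradedVect := ∀ _ : I, FGModuleCat.{u} k

instance : Preadditive (GradedVect k I) where
  homGroup X Y := inferInstanceAs (AddCommGroup (∀ i, X i ⟶ Y i))
  add_comp P Q R f f' g := by funext i; exact Preadditive.add_comp _ _ _ (f i) (f' i) (g i)
  comp_add P Q R f g g' := by funext i; exact Preadditive.comp_add _ _ _ (f i) (g i) (g' i)

instance : CategoryTheory.Linear k (GradedVect k I) where
  homModule X Y := inferInstanceAs (Module k (∀ i, X i ⟶ Y i))
  smul_comp P Q R r f g := by funext i; exact CategoryTheory.Linear.smul_comp _ _ _ r (f i) (g i)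
  comp_smul P Q R f r g := by funext i; exact CategoryTheory.Linear.comp_smul _ _ _ (f i) r (g i)

instance (X Y : GradedVect k I) : Module.Finite k (X ⟶ Y) :=
  inferInstanceAs (Module.Finite k (∀ i, X i ⟶ Y i))

/-- The category `Quiv_I` of linear quivers on the vertex set `I`: objects are families
`Q(i,j)` of finite-dimensional `k`-vector spaces (the arrow spaces); a morphism `Q ⟶ P` is a
family of linear maps `P(i,j) → Q(i,j)`. -/
def QuivCat := I → I → FGModuleCat.{u} k

instance : Category (QuivCat k I) where
  Hom Q P := ∀ i j : I, P i j ⟶ Q i j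
  id Q := fun _ _ => 𝟙 _
  comp f g := fun i j => g i j ≫ f i j
  id_comp f := by funext i j; exact Category.comp_id (f i j)
  comp_id f := by funext i j; exact Category.id_comp (f i j)
  assoc f g h := by funext i j; exact (Category.assoc (h i j) (g i j) (f i j)).symm

/-- The category of `k`-linear endofunctors of `M`. -/
def EndCat := ObjectProperty.FullSubcategory
  (fun F : GradedVect k I ⥤ GradedVect k I =>
    F.Additive ∧ ∀ {X Y : GradedVect k I} (r : k) (f : X ⟶ Y), F.map (r • f) = r • F.map f)

instance : Category (EndCat k I) :=
  inferInstanceAs (Category (ObjectProperty.FullSubcategory _))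

/-- The simple object `x_i` of `M`: the `I`-graded vector space with value `k` in degree `i`
and `0` elsewhere. -/
noncomputable def simpleAt (i : I) : GradedVect k I :=
  fun j => if j = i then FGModuleCat.of k k else FGModuleCat.of k PUnit

/-- The quiver `Q(R)` of a linear endofunctor `R` of `M`, with arrow spaces
`Q(R)(i,j) = Hom_M(R(x_i), x_j)^∗`. -/
noncomputable def quiverOf (R : EndCat k I) : QuivCat k I :=
  fun i j => FGModuleCat.of k
    (Module.Dual k (R.obj.obj (simpleAt k I i) ⟶ simpleAt k I j))

instance (M : I → Type u) [∀ i, AddCommGroup (M i)] [∀ i, Module k (M i)]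
    [∀ i, Module.Finite k (M i)] : Module.Finite k (DirectSum I M) :=
  Module.Finite.equiv (DirectSum.linearEquivFunOnFintype k I M).symm

/-- The value `R(Q)(x_i) = ⊕_{j} Q(i,j) ⊗_k x_j` of the endofunctor associated to a quiver
`Q` on the simple object `x_i`; its component in degree `j'` is `⨁_j Q(i,j) ⊗ (x_j)_{j'}`. -/
noncomputable def endofunctorValueAt (Q : QuivCat k I) (i : I) : GradedVect k I :=
  fun j' => FGModuleCat.of k
    (DirectSum I (fun j : I => TensorProduct k (Q i j) ((simpleAt k I j) j')))


/-! ### Auxiliary material -/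

namespace Stmt16

set_option linter.unusedSectionVars false

open TensorProduct

variable {k : Type u} [Field k] {I : Type u} [Fintype I] [DecidableEq I]

/-- Morphisms of `FGModuleCat` as linear maps. -/
noncomputable def homL {A B : FGModuleCat.{u} k} : (A ⟶ B) ≃ₗ[k] (A →ₗ[k] B) :=
  InducedCategory.homLinearEquiv.trans ModuleCat.homLinearEquiv

/-- Linear maps as morphisms of `FGModuleCat`. -/
noncomputable def toHom {A B : FGModuleCat.{u} k} (f : A →ₗ[k] B) : A ⟶ B := homL.symm f

@[simp] lemma toHom_apply {A B : FGModuleCat.{u} k} (f : A →ₗ[k] B) (x : A) :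
    toHom f x = f x := rfl

lemma homL_apply {A B : FGModuleCat.{u} k} (f : A ⟶ B) (x : A) : homL f x = f x := rfl

lemma hom_sum_apply {A B : FGModuleCat.{u} k} {T : Type*} (t : Finset T) (f : T → (A ⟶ B))
    (x : A) : (∑ a ∈ t, f a) x = ∑ a ∈ t, f a x := by
  rw [← homL_apply, map_sum, LinearMap.sum_apply]
  rfl

lemma homSubLeft (A B : FGModuleCat k) [Subsingleton A] : Subsingleton (A ⟶ B) := by
  haveI : Subsingleton A.obj := ‹Subsingleton A.carrier›
  exact ⟨fun f g => by ext x; rw [Subsingleton.elim x 0, map_zero, map_zero]⟩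

lemma homSubRight (A B : FGModuleCat k) [Subsingleton B] : Subsingleton (A ⟶ B) := by
  haveI : Subsingleton B.obj := ‹Subsingleton B.carrier›
  exact ⟨fun f g => by ext x; exact Subsingleton.elim _ _⟩

lemma simpleAt_self (i : I) : simpleAt k I i i = FGModuleCat.of k k := by
  simp [simpleAt]

lemma simpleAt_ne {i j : I} (h : j ≠ i) : simpleAt k I i j = FGModuleCat.of k PUnit := by
  simp [simpleAt, h]

lemma simpleAt_subsingleton {i j : I} (h : j ≠ i) : Subsingleton (simpleAt k I i j) := by
  rw [simpleAt_ne h]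
  exact inferInstanceAs (Subsingleton PUnit)

/-- Projection equivalence for a pi type in which all but one factor is trivial. -/
noncomputable def piEquivAt {M : I → Type u} [∀ i, AddCommGroup (M i)] [∀ i, Module k (M i)]
    (i0 : I) (h : ∀ i, i ≠ i0 → Subsingleton (M i)) : (∀ i, M i) ≃ₗ[k] M i0 where
  toFun f := f i0
  map_add' _ _ := rfl
  map_smul' _ _ := rfl
  invFun x i := if h' : i = i0 then (congrArg M h').symm ▸ x else 0
  left_inv f := by
    funext i
    by_cases h' : i = i0
    · subst h'; simp
    · haveI := h i h'
      exact Subsingleton.elim _ _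
  right_inv x := by simp

/-- Component data for `hat`. -/
noncomputable def hatC (X : GradedVect k I) (i j : I) (h : j = i) :
    X i →ₗ[k] ((simpleAt k I i) j ⟶ X j) :=
  homL.symm.toLinearMap.comp ((LinearMap.llcomp k ((simpleAt k I i) j) (X i) (X j)
      (homL (eqToHom (congrArg X h.symm) : X i ⟶ X j))).comp
    ((LinearMap.lcomp k (X i)
        (homL (eqToHom (by rw [h]; exact simpleAt_self i) : (simpleAt k I i) j ⟶ FGModuleCat.of k k))).comp
      (LinearMap.ringLmapEquivSelf k k (X i)).symm.toLinearMap))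

/-- The morphism `x_i ⟶ X` corresponding to an element `v : X i`, linearly in `v`. -/
noncomputable def hat (X : GradedVect k I) (i : I) : X i →ₗ[k] (simpleAt k I i ⟶ X) :=
  LinearMap.pi fun j => if h : j = i then hatC X i j h else 0

/-- Component data for `coHat`. -/
noncomputable def coHatC (X : GradedVect k I) (i j : I) (h : j = i) :
    Module.Dual k (X i) →ₗ[k] (X j ⟶ (simpleAt k I i) j) :=
  homL.symm.toLinearMap.comp ((LinearMap.llcomp k (X j) (FGModuleCat.of k k) ((simpleAt k I i) j)
      (homL (eqToHom ((by rw [h]; exact simpleAt_self i : (simpleAt k I i) j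
          = FGModuleCat.of k k)).symm : FGModuleCat.of k k ⟶ (simpleAt k I i) j))).comp
    (LinearMap.lcomp k k (homL (eqToHom (congrArg X h) : X j ⟶ X i))))

/-- The morphism `X ⟶ x_i` corresponding to a functional on `X i`, linearly. -/
noncomputable def coHat (X : GradedVect k I) (i : I) :
    Module.Dual k (X i) →ₗ[k] (X ⟶ simpleAt k I i) :=
  LinearMap.pi fun j => if h : j = i then coHatC X i j h else 0

lemma hat_apply (X : GradedVect k I) (i : I) (v : X i) (j : I) :
    hat X i v j = if h : j = i then hatC X i j h v else 0 := by
  have e : hat X i v j = DFunLike.coe (if h : j = i then hatC X i j h else 0) v := rfl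
  rw [e]
  by_cases h : j = i
  · rw [dif_pos h, dif_pos h]
  · rw [dif_neg h, dif_neg h]; rfl

lemma coHat_apply (X : GradedVect k I) (i : I) (φ : Module.Dual k (X i)) (j : I) :
    coHat X i φ j = if h : j = i then coHatC X i j h φ else 0 := by
  have e : coHat X i φ j = DFunLike.coe (if h : j = i then coHatC X i j h else 0) φ := rfl
  rw [e]
  by_cases h : j = i
  · rw [dif_pos h, dif_pos h]
  · rw [dif_neg h, dif_neg h]; rfl


lemma eqToHom_apply_symm {A B : FGModuleCat k} (e : A = B) (y : B) :
    eqToHom e (eqToHom e.symm y) = y := by subst e; rfl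

lemma eqToHom_symm_apply {A B : FGModuleCat k} (e : A = B) (y : A) :
    eqToHom e.symm (eqToHom e y) = y := by subst e; rfl

lemma hat_comp {X Y : GradedVect k I} (i : I) (v : X i) (g : X ⟶ Y) :
    hat X i v ≫ g = hat Y i (g i v) := by
  funext j
  show hat X i v j ≫ g j = hat Y i (g i v) j
  rw [hat_apply, hat_apply]
  by_cases h : j = i
  · rw [dif_pos h, dif_pos h]
    subst h
    ext x
    have e : (simpleAt k I j) j = FGModuleCat.of k k := simpleAt_self j
    show g j ((eqToHom e x : k) • v) = (eqToHom e x : k) • g j v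
    rw [map_smul]
  · rw [dif_neg h, dif_neg h]
    simp

lemma hat_coHat_same (X : GradedVect k I) (i : I) (v : X i) (φ : Module.Dual k (X i)) :
    hat X i v ≫ coHat X i φ = φ v • 𝟙 (simpleAt k I i) := by
  funext j
  show hat X i v j ≫ coHat X i φ j = (φ v • 𝟙 (simpleAt k I i)) j
  rw [hat_apply, coHat_apply]
  by_cases h : j = i
  · rw [dif_pos h, dif_pos h]
    subst h
    ext x
    have e : (simpleAt k I j) j = FGModuleCat.of k k := simpleAt_self j
    show eqToHom e.symm (φ ((eqToHom e x : k) • v)) = φ v • x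
    rw [map_smul φ, smul_eq_mul, mul_comm, ← smul_eq_mul,
      map_smul (ConcreteCategory.hom (eqToHom e.symm : FGModuleCat.of k k ⟶ (simpleAt k I j) j)),
      eqToHom_symm_apply]
  · rw [dif_neg h, dif_neg h]
    haveI := simpleAt_subsingleton (k := k) h
    haveI := homSubRight ((simpleAt k I i) j) ((simpleAt k I i) j)
    exact Subsingleton.elim _ _

lemma hat_coHat_ne (X : GradedVect k I) {i i' : I} (hne : i' ≠ i) (v : X i')
    (φ : Module.Dual k (X i)) : hat X i' v ≫ coHat X i φ = 0 := by
  funext j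
  show hat X i' v j ≫ coHat X i φ j = 0
  by_cases h : j = i
  · rw [hat_apply, dif_neg (fun h' : j = i' => hne (h'.symm.trans h))]
    simp
  · rw [coHat_apply, dif_neg h]
    simp

lemma sum_coHat_hat (X : GradedVect k I) :
    (∑ i : I, ∑ s : Fin (Module.finrank k (X i)),
      coHat X i ((Module.finBasis k (X i)).coord s) ≫ hat X i (Module.finBasis k (X i) s))
      = 𝟙 X := by
  funext j
  have e1 : (∑ i : I, ∑ s : Fin (Module.finrank k (X i)),
      coHat X i ((Module.finBasis k (X i)).coord s) ≫ hat X i (Module.finBasis k (X i) s)) j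
      = ∑ i : I, ∑ s : Fin (Module.finrank k (X i)),
        (coHat X i ((Module.finBasis k (X i)).coord s) j ≫ hat X i (Module.finBasis k (X i) s) j) := by
    rw [Finset.sum_apply]
    exact Finset.sum_congr rfl fun i _ => by rw [Finset.sum_apply]; rfl
  rw [e1]
  rw [Finset.sum_eq_single j]
  · have e2 : ∀ s : Fin (Module.finrank k (X j)),
        coHat X j ((Module.finBasis k (X j)).coord s) j ≫ hat X j (Module.finBasis k (X j) s) j
        = toHom ((LinearMap.toSpanSingleton k (X j) (Module.finBasis k (X j) s)).comp
            ((Module.finBasis k (X j)).coord s)) := by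
      intro s
      rw [coHat_apply, hat_apply, dif_pos rfl, dif_pos rfl]
      ext x
      have e : (simpleAt k I j) j = FGModuleCat.of k k := simpleAt_self j
      show (eqToHom e (eqToHom e.symm (((Module.finBasis k (X j)).coord s) x)) : k)
          • Module.finBasis k (X j) s
        = ((Module.finBasis k (X j)).coord s x) • Module.finBasis k (X j) s
      rw [eqToHom_apply_symm]
    rw [Finset.sum_congr rfl fun s _ => e2 s]
    ext x
    refine (hom_sum_apply _ _ x).trans ?_
    show (∑ s : Fin (Module.finrank k (X j)),
        ((Module.finBasis k (X j)).coord s x) • Module.finBasis k (X j) s) = x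
    simp only [Module.Basis.coord_apply]
    exact (Module.finBasis k (X j)).sum_repr x
  · intro i _ hne
    apply Finset.sum_eq_zero
    intro s _
    rw [coHat_apply, dif_neg (fun h : j = i => hne h.symm)]
    simp
  · intro h; exact absurd (Finset.mem_univ j) h


/-! ### The endofunctor attached to a quiver -/

/-- Object part: `F_Q(X)(j) = ⊕_i X(i) ⊗ Q(i,j)`. -/
noncomputable def Fobj (Q : QuivCat k I) (X : GradedVect k I) : GradedVect k I :=
  fun j => FGModuleCat.of k (DirectSum I (fun i => TensorProduct k (X i : Type u) (Q i j : Type u)))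

/-- Morphism part of `F_Q`. -/
noncomputable def Fmap (Q : QuivCat k I) {X Y : GradedVect k I} (f : X ⟶ Y) :
    Fobj Q X ⟶ Fobj Q Y :=
  fun j => toHom (DirectSum.toModule k I _ fun i =>
    (DirectSum.lof k I (fun i => TensorProduct k (Y i) (Q i j)) i).comp
      (TensorProduct.map (homL (f i)) LinearMap.id))

lemma Fmap_lof (Q : QuivCat k I) {X Y : GradedVect k I} (f : X ⟶ Y) (j i : I)
    (v : X i) (q : Q i j) :
    Fmap Q f j (DirectSum.lof k I (fun i => TensorProduct k (X i) (Q i j)) i (v ⊗ₜ q))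
      = DirectSum.lof k I (fun i => TensorProduct k (Y i) (Q i j)) i (f i v ⊗ₜ q) := by
  simp only [Fmap]
  erw [DirectSum.toModule_lof]
  rfl

/-- The `k`-linear endofunctor attached to a quiver. -/
noncomputable def Ffun (Q : QuivCat k I) : GradedVect k I ⥤ GradedVect k I where
  obj := Fobj Q
  map := Fmap Q
  map_id X := by
    funext j
    refine homL.injective ?_
    refine DirectSum.linearMap_ext k fun i => TensorProduct.ext' fun v q => ?_
    show Fmap Q (𝟙 X) j (DirectSum.lof k I _ i (v ⊗ₜ q))
      = (𝟙 (Fobj Q X)) j (DirectSum.lof k I _ i (v ⊗ₜ q))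
    rw [Fmap_lof]
    rfl
  map_comp {X Y Z} f g := by
    funext j
    refine homL.injective ?_
    refine DirectSum.linearMap_ext k fun i => TensorProduct.ext' fun v q => ?_
    show Fmap Q (f ≫ g) j (DirectSum.lof k I _ i (v ⊗ₜ q))
      = Fmap Q g j (Fmap Q f j (DirectSum.lof k I _ i (v ⊗ₜ q)))
    rw [Fmap_lof, Fmap_lof, Fmap_lof]
    rfl

/-- `F_Q` as an object of `EndCat`. -/
noncomputable def FEnd (Q : QuivCat k I) : EndCat k I := by
  refine ⟨Ffun Q, ⟨⟨fun {X Y f g} => ?_⟩, fun {X Y} r f => ?_⟩⟩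
  · funext j
    refine homL.injective ?_
    refine DirectSum.linearMap_ext k fun i => TensorProduct.ext' fun v q => ?_
    show Fmap Q (f + g) j (DirectSum.lof k I _ i (v ⊗ₜ q))
      = Fmap Q f j (DirectSum.lof k I _ i (v ⊗ₜ q))
        + Fmap Q g j (DirectSum.lof k I _ i (v ⊗ₜ q))
    rw [Fmap_lof, Fmap_lof, Fmap_lof]
    have e : ((f + g) i) v = f i v + g i v := rfl
    rw [e, TensorProduct.add_tmul, map_add]
    rfl
  · funext j
    refine homL.injective ?_
    refine DirectSum.linearMap_ext k fun i => TensorProduct.ext' fun v q => ?_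
    show Fmap Q (r • f) j (DirectSum.lof k I _ i (v ⊗ₜ q))
      = r • (Fmap Q f j (DirectSum.lof k I _ i (v ⊗ₜ q)))
    rw [Fmap_lof, Fmap_lof]
    have e : ((r • f) i) v = r • (f i v) := rfl
    rw [e, ← TensorProduct.smul_tmul', map_smul]
    rfl

/-- The action of a quiver morphism on the attached endofunctors. -/
noncomputable def Gmap {Q P : QuivCat k I} (φ : Q ⟶ P) (X : GradedVect k I) :
    Fobj P X ⟶ Fobj Q X :=
  fun j => toHom (DirectSum.toModule k I _ fun i =>
    (DirectSum.lof k I (fun i => TensorProduct k (X i) (Q i j)) i).comp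
      (TensorProduct.map LinearMap.id (homL (φ i j))))

lemma Gmap_lof {Q P : QuivCat k I} (φ : Q ⟶ P) (X : GradedVect k I) (j i : I)
    (v : X i) (q : P i j) :
    Gmap φ X j (DirectSum.lof k I (fun i => TensorProduct k (X i) (P i j)) i (v ⊗ₜ q))
      = DirectSum.lof k I (fun i => TensorProduct k (X i) (Q i j)) i (v ⊗ₜ φ i j q) := by
  simp only [Gmap]
  erw [DirectSum.toModule_lof]
  rfl

/-- The natural transformation attached to a quiver morphism. -/
noncomputable def GnatT {Q P : QuivCat k I} (φ : Q ⟶ P) : (FEnd P).obj ⟶ (FEnd Q).obj where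
  app X := Gmap φ X
  naturality {X Y} f := by
    funext j
    refine homL.injective ?_
    refine DirectSum.linearMap_ext k fun i => TensorProduct.ext' fun v q => ?_
    show Gmap φ Y j (Fmap P f j (DirectSum.lof k I _ i (v ⊗ₜ q)))
      = Fmap Q f j (Gmap φ X j (DirectSum.lof k I _ i (v ⊗ₜ q)))
    rw [Fmap_lof, Gmap_lof, Gmap_lof, Fmap_lof]

/-- The natural transformation attached to a quiver morphism. -/
noncomputable def Gnat {Q P : QuivCat k I} (φ : Q ⟶ P) : (FEnd P : EndCat k I) ⟶ FEnd Q :=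
  ObjectProperty.homMk (GnatT φ)

/-- The functor `Quiv_I ⥤ (End_k M)ᵒᵖ`. -/
noncomputable def Tfun : QuivCat k I ⥤ (EndCat k I)ᵒᵖ where
  obj Q := Opposite.op (FEnd Q)
  map {Q P} φ := (Gnat φ).op
  map_id Q := by
    refine Quiver.Hom.unop_inj ?_
    refine InducedCategory.hom_ext ?_
    refine NatTrans.ext ?_
    funext X j
    refine homL.injective ?_
    refine DirectSum.linearMap_ext k fun i => TensorProduct.ext' fun v q => ?_
    show Gmap (𝟙 Q) X j (DirectSum.lof k I _ i (v ⊗ₜ q))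
      = DirectSum.lof k I _ i (v ⊗ₜ q)
    rw [Gmap_lof]
    rfl
  map_comp {Q P O} φ ψ := by
    refine Quiver.Hom.unop_inj ?_
    refine InducedCategory.hom_ext ?_
    refine NatTrans.ext ?_
    funext X j
    refine homL.injective ?_
    refine DirectSum.linearMap_ext k fun i => TensorProduct.ext' fun v q => ?_
    show Gmap (φ ≫ ψ) X j (DirectSum.lof k I _ i (v ⊗ₜ q))
      = Gmap φ X j (Gmap ψ X j (DirectSum.lof k I _ i (v ⊗ₜ q)))
    rw [Gmap_lof, Gmap_lof, Gmap_lof]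
    rfl

/-- The functor `(End_k M)ᵒᵖ ⥤ Quiv_I`. -/
noncomputable def Sfun : (EndCat k I)ᵒᵖ ⥤ QuivCat k I where
  obj R := fun i j => R.unop.obj.obj (simpleAt k I i) j
  map {R R'} θ := fun i j => (θ.unop).hom.app (simpleAt k I i) j
  map_id R := by funext i j; rfl
  map_comp θ η := by funext i j; rfl


/-! ### Linear-algebra helpers for the unit and the comparison isomorphisms -/

noncomputable def castEquiv {A B : FGModuleCat k} (e : A = B) : A ≃ₗ[k] B := by
  subst e; exact LinearEquiv.refl k A

lemma piEquivAt_apply {M : I → Type u} [∀ i, AddCommGroup (M i)] [∀ i, Module k (M i)]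
    (i0 : I) (h : ∀ i, i ≠ i0 → Subsingleton (M i)) (f : ∀ i, M i) :
    piEquivAt (k := k) i0 h f = f i0 := rfl

noncomputable def directSumEquivAt {M : I → Type u} [∀ i, AddCommGroup (M i)]
    [∀ i, Module k (M i)] (i0 : I) (h : ∀ i, i ≠ i0 → Subsingleton (M i)) :
    DirectSum I M ≃ₗ[k] M i0 :=
  (DirectSum.linearEquivFunOnFintype k I M).trans (piEquivAt (k := k) i0 h)

lemma directSumEquivAt_lof_same {M : I → Type u} [∀ i, AddCommGroup (M i)]
    [∀ i, Module k (M i)] (i0 : I) (h : ∀ i, i ≠ i0 → Subsingleton (M i)) (x : M i0) :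
    directSumEquivAt (k := k) i0 h (DirectSum.lof k I M i0 x) = x := by
  rw [directSumEquivAt, LinearEquiv.trans_apply, piEquivAt_apply,
    DirectSum.linearEquivFunOnFintype_lof, Pi.single_eq_same]

lemma directSumEquivAt_lof_ne {M : I → Type u} [∀ i, AddCommGroup (M i)]
    [∀ i, Module k (M i)] (i0 : I) (h : ∀ i, i ≠ i0 → Subsingleton (M i)) {i : I}
    (hne : i ≠ i0) (x : M i) :
    directSumEquivAt (k := k) i0 h (DirectSum.lof k I M i x) = 0 := by
  rw [directSumEquivAt, LinearEquiv.trans_apply, piEquivAt_apply,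
    DirectSum.linearEquivFunOnFintype_lof, Pi.single_eq_of_ne (Ne.symm hne)]

lemma fobj_tensor_subsingleton (Q : QuivCat k I) (i j : I) :
    ∀ i', i' ≠ i → Subsingleton (TensorProduct k ((simpleAt k I i) i') (Q i' j)) := by
  intro i' h
  haveI := simpleAt_subsingleton (k := k) (I := I) h
  infer_instance

/-- The component identification `F_Q(x_i)(j) ≃ Q(i,j)`. -/
noncomputable def unitEquiv (Q : QuivCat k I) (i j : I) :
    Fobj Q (simpleAt k I i) j ≃ₗ[k] Q i j :=
  (directSumEquivAt i (fobj_tensor_subsingleton Q i j)).trans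
    ((TensorProduct.congr (castEquiv (simpleAt_self i)) (LinearEquiv.refl k (Q i j))).trans
      (TensorProduct.lid k (Q i j)))

lemma unitEquiv_lof_same (Q : QuivCat k I) (i j : I) (v : (simpleAt k I i) i) (q : Q i j) :
    unitEquiv Q i j
      (DirectSum.lof k I (fun i' => TensorProduct k ((simpleAt k I i) i') (Q i' j)) i (v ⊗ₜ q))
      = (castEquiv (simpleAt_self i) v : k) • q := by
  rw [unitEquiv]; erw [LinearEquiv.trans_apply]
  erw [directSumEquivAt_lof_same]
  rw [LinearEquiv.trans_apply, TensorProduct.congr_tmul]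
  erw [TensorProduct.lid_tmul]
  rfl

lemma unitEquiv_lof_ne (Q : QuivCat k I) (i j : I) {i' : I} (hne : i' ≠ i)
    (v : (simpleAt k I i) i') (q : Q i' j) :
    unitEquiv Q i j
      (DirectSum.lof k I (fun i' => TensorProduct k ((simpleAt k I i) i') (Q i' j)) i' (v ⊗ₜ q))
      = 0 := by
  rw [unitEquiv]; erw [LinearEquiv.trans_apply]
  erw [directSumEquivAt_lof_ne _ _ hne]
  rw [map_zero]

/-- Build an isomorphism in `GradedVect` from componentwise linear equivalences. -/
noncomputable def gradedIso {X Y : GradedVect k I} (e : ∀ j, X j ≃ₗ[k] Y j) : X ≅ Y where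
  hom := fun j => toHom (e j).toLinearMap
  inv := fun j => toHom (e j).symm.toLinearMap
  hom_inv_id := by
    funext j; ext x
    show (e j).symm (e j x) = x
    simp
  inv_hom_id := by
    funext j; ext x
    show (e j) ((e j).symm x) = x
    simp

/-- Build an isomorphism in `QuivCat` from componentwise linear equivalences. -/
noncomputable def quivIso {A B : QuivCat k I} (e : ∀ i j, A i j ≃ₗ[k] B i j) : A ≅ B where
  hom := fun i j => toHom (e i j).symm.toLinearMap
  inv := fun i j => toHom (e i j).toLinearMap
  hom_inv_id := by
    funext i j; ext x
    show (e i j).symm (e i j x) = x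
    simp
  inv_hom_id := by
    funext i j; ext x
    show (e i j) ((e i j).symm x) = x
    simp

noncomputable def homCongrRight {A B C : FGModuleCat k} (e : B = C) :
    (A ⟶ B) ≃ₗ[k] (A ⟶ C) := by
  subst e; exact LinearEquiv.refl _ _

noncomputable def homDualId (A : FGModuleCat k) :
    (A ⟶ FGModuleCat.of k k) ≃ₗ[k] Module.Dual k A where
  toFun f := homL f
  map_add' _ _ := rfl
  map_smul' _ _ := rfl
  invFun f := toHom f
  left_inv _ := rfl
  right_inv _ := rfl

lemma homToSimple_sub (X : GradedVect k I) (j : I) :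
    ∀ j', j' ≠ j → Subsingleton (X j' ⟶ (simpleAt k I j) j') := by
  intro j' h
  haveI := simpleAt_subsingleton (k := k) (I := I) h
  exact homSubRight _ _

/-- `Hom(X, x_j) ≃ (X j)^*`. -/
noncomputable def homToSimple (X : GradedVect k I) (j : I) :
    (X ⟶ simpleAt k I j) ≃ₗ[k] Module.Dual k (X j) :=
  ((piEquivAt (k := k) (M := fun j' => (X j' ⟶ (simpleAt k I j) j')) j (homToSimple_sub X j)).trans
    (homCongrRight (simpleAt_self j))).trans (homDualId (X j))


/-! ### The counit: comparison of `F_{Q_R}` with `R` -/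

/-- Coerce a morphism of `FGModuleCat` to a linear map. -/
noncomputable def asLin {A B : FGModuleCat k} (f : A ⟶ B) : (A : Type u) →ₗ[k] B := homL f

/-- The quiver attached to an endofunctor. -/
noncomputable def QR (R : EndCat k I) : QuivCat k I :=
  fun i j => R.obj.obj (simpleAt k I i) j

/-- The comparison map `⊕_i X(i) ⊗ R(x_i)(j) → R(X)(j)`. -/
noncomputable def alphaApp (R : EndCat k I) (X : GradedVect k I) :
    Fobj (QR R) X ⟶ R.obj.obj X :=
  fun j => toHom <| DirectSum.toModule k I _ fun i => TensorProduct.lift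
    { toFun := fun v => asLin (R.obj.map (hat X i v) j)
      map_add' := fun v w => by
        haveI : (R.obj).Additive := R.property.1
        have e : hat X i (v + w) = hat X i v + hat X i w := map_add _ _ _
        beta_reduce
        rw [e, CategoryTheory.Functor.map_add]
        rfl
      map_smul' := fun r v => by
        have e : hat X i (r • v) = r • hat X i v := map_smul _ _ _
        beta_reduce
        rw [e, R.property.2]
        rfl }

lemma alphaApp_lof (R : EndCat k I) (X : GradedVect k I) (j i : I) (v : X i)
    (w : (QR R) i j) :
    alphaApp R X j
        (DirectSum.lof k I (fun i => TensorProduct k (X i) ((QR R) i j)) i (v ⊗ₜ w))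
      = R.obj.map (hat X i v) j w := by
  simp only [alphaApp]
  erw [DirectSum.toModule_lof]
  rfl

lemma sum_comp_apply {X Y : GradedVect k I} {T : Type*} (t : Finset T) (f : T → (X ⟶ Y))
    (j : I) (y : X j) : (∑ a ∈ t, f a) j y = ∑ a ∈ t, f a j y := by
  have e : (∑ a ∈ t, f a) j = ∑ a ∈ t, f a j := Finset.sum_apply _ _ _
  rw [e]
  exact hom_sum_apply _ _ _

/-- The inverse comparison map, built from a choice of bases. -/
noncomputable def betaApp (R : EndCat k I) (X : GradedVect k I) (j : I) :
    (R.obj.obj X j : Type u) →ₗ[k] Fobj (QR R) X j :=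
  ∑ i : I, ∑ s : Fin (Module.finrank k (X i)),
    (DirectSum.lof k I (fun i => TensorProduct k (X i) ((QR R) i j)) i).comp
      (((TensorProduct.mk k (X i) ((QR R) i j)) (Module.finBasis k (X i) s)).comp
        (asLin (R.obj.map (coHat X i ((Module.finBasis k (X i)).coord s)) j)))

lemma alpha_beta (R : EndCat k I) (X : GradedVect k I) (j : I) :
    (asLin (alphaApp R X j)).comp (betaApp R X j) = LinearMap.id := by
  haveI : (R.obj).Additive := R.property.1
  apply LinearMap.ext; intro y
  show alphaApp R X j (betaApp R X j y) = y
  have hb : betaApp R X j y = ∑ i : I, ∑ s : Fin (Module.finrank k (X i)),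
      DirectSum.lof k I (fun i => TensorProduct k (X i) ((QR R) i j)) i
        ((Module.finBasis k (X i) s) ⊗ₜ
          (asLin (R.obj.map (coHat X i ((Module.finBasis k (X i)).coord s)) j) y)) := by
    rw [betaApp]
    erw [LinearMap.sum_apply]
    refine Finset.sum_congr rfl fun i _ => ?_
    erw [LinearMap.sum_apply]
    rfl
  rw [hb]
  erw [map_sum]
  have h2 : ∀ i : I, (alphaApp R X j) (∑ s : Fin (Module.finrank k (X i)),
      DirectSum.lof k I (fun i => TensorProduct k (X i) ((QR R) i j)) i
        ((Module.finBasis k (X i) s) ⊗ₜ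
          (asLin (R.obj.map (coHat X i ((Module.finBasis k (X i)).coord s)) j) y)))
      = ∑ s : Fin (Module.finrank k (X i)),
          (R.obj.map (coHat X i ((Module.finBasis k (X i)).coord s)
            ≫ hat X i (Module.finBasis k (X i) s))) j y := by
    intro i
    erw [map_sum]
    refine Finset.sum_congr rfl fun s _ => ?_
    erw [alphaApp_lof]; rw [Functor.map_comp]
    rfl
  erw [Finset.sum_congr rfl fun i _ => h2 i]
  have h5 : (∑ i : I, ∑ s : Fin (Module.finrank k (X i)),
      R.obj.map (coHat X i ((Module.finBasis k (X i)).coord s)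
        ≫ hat X i (Module.finBasis k (X i) s))) = R.obj.map (𝟙 X) := by
    rw [← sum_coHat_hat X, CategoryTheory.Functor.map_sum]
    exact Finset.sum_congr rfl fun i _ => (CategoryTheory.Functor.map_sum _ _ _).symm
  calc ∑ i : I, ∑ s : Fin (Module.finrank k (X i)),
        (R.obj.map (coHat X i ((Module.finBasis k (X i)).coord s)
          ≫ hat X i (Module.finBasis k (X i) s))) j y
      = ∑ i : I, (∑ s : Fin (Module.finrank k (X i)),
          R.obj.map (coHat X i ((Module.finBasis k (X i)).coord s)
            ≫ hat X i (Module.finBasis k (X i) s))) j y :=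
        Finset.sum_congr rfl fun i _ => (sum_comp_apply _ _ _ _).symm
    _ = (∑ i : I, ∑ s : Fin (Module.finrank k (X i)),
          R.obj.map (coHat X i ((Module.finBasis k (X i)).coord s)
            ≫ hat X i (Module.finBasis k (X i) s))) j y :=
        (sum_comp_apply _ _ _ _).symm
    _ = (R.obj.map (𝟙 X)) j y := by rw [h5]
    _ = y := by rw [CategoryTheory.Functor.map_id]; rfl

lemma beta_alpha (R : EndCat k I) (X : GradedVect k I) (j : I) :
    (betaApp R X j).comp (asLin (alphaApp R X j)) = LinearMap.id := by
  haveI : (R.obj).Additive := R.property.1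
  refine DirectSum.linearMap_ext k fun i' => TensorProduct.ext' fun v w => ?_
  show betaApp R X j (alphaApp R X j (DirectSum.lof k I _ i' (v ⊗ₜ w)))
    = DirectSum.lof k I (fun i => TensorProduct k (X i) ((QR R) i j)) i' (v ⊗ₜ w)
  rw [alphaApp_lof, betaApp]
  erw [LinearMap.sum_apply]
  rw [Finset.sum_eq_single i']
  · erw [LinearMap.sum_apply]
    have hterm : ∀ s ∈ (Finset.univ : Finset (Fin (Module.finrank k (X i')))),
        ((DirectSum.lof k I (fun i => TensorProduct k (X i) ((QR R) i j)) i').comp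
          (((TensorProduct.mk k (X i') ((QR R) i' j)) (Module.finBasis k (X i') s)).comp
            (asLin (R.obj.map (coHat X i' ((Module.finBasis k (X i')).coord s)) j))))
          (R.obj.map (hat X i' v) j w)
        = DirectSum.lof k I (fun i => TensorProduct k (X i) ((QR R) i j)) i'
            (((((Module.finBasis k (X i')).coord s) v) • Module.finBasis k (X i') s) ⊗ₜ w) := by
      intro s _
      have h1 : R.obj.map (hat X i' v) ≫ R.obj.map (coHat X i' ((Module.finBasis k (X i')).coord s))
          = ((Module.finBasis k (X i')).coord s v) • 𝟙 (R.obj.obj (simpleAt k I i')) := by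
        rw [← Functor.map_comp, hat_coHat_same, R.property.2, CategoryTheory.Functor.map_id]
      have hin : asLin (R.obj.map (coHat X i' ((Module.finBasis k (X i')).coord s)) j)
          (R.obj.map (hat X i' v) j w)
          = (((Module.finBasis k (X i')).coord s) v) • w := by
        show ((R.obj.map (hat X i' v) ≫ R.obj.map (coHat X i' ((Module.finBasis k (X i')).coord s))) j) w = _
        rw [h1]
        rfl
      show DirectSum.lof k I (fun i => TensorProduct k (X i) ((QR R) i j)) i'
          ((Module.finBasis k (X i') s) ⊗ₜ
            (asLin (R.obj.map (coHat X i' ((Module.finBasis k (X i')).coord s)) j)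
              (R.obj.map (hat X i' v) j w))) = _
      rw [hin, ← TensorProduct.smul_tmul]
    rw [Finset.sum_congr rfl hterm]
    have hF : ∀ x : X i',
        DirectSum.lof k I (fun i => TensorProduct k (X i) ((QR R) i j)) i' (x ⊗ₜ w)
        = ((DirectSum.lof k I (fun i => TensorProduct k (X i) ((QR R) i j)) i').comp
            ((TensorProduct.mk k (X i') ((QR R) i' j)).flip w)) x := fun x => rfl
    rw [Finset.sum_congr rfl fun s _ => hF _, ← map_sum]
    rw [show (∑ s : Fin (Module.finrank k (X i')),
        ((((Module.finBasis k (X i')).coord s) v) • Module.finBasis k (X i') s)) = v from by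
      simp only [Module.Basis.coord_apply]
      exact (Module.finBasis k (X i')).sum_repr v]
    exact (hF v).symm
  · intro i _ hne
    erw [LinearMap.sum_apply]
    apply Finset.sum_eq_zero
    intro s _
    have h0 : R.obj.map (hat X i' v) ≫ R.obj.map (coHat X i ((Module.finBasis k (X i)).coord s))
        = 0 := by
      rw [← Functor.map_comp, hat_coHat_ne X (fun h => hne h.symm), CategoryTheory.Functor.map_zero]
    have hin : asLin (R.obj.map (coHat X i ((Module.finBasis k (X i)).coord s)) j)
        (R.obj.map (hat X i' v) j w) = 0 := by
      show ((R.obj.map (hat X i' v) ≫ R.obj.map (coHat X i ((Module.finBasis k (X i)).coord s))) j) w = 0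
      rw [h0]
      rfl
    show DirectSum.lof k I (fun i => TensorProduct k (X i) ((QR R) i j)) i
        ((Module.finBasis k (X i) s) ⊗ₜ
          (asLin (R.obj.map (coHat X i ((Module.finBasis k (X i)).coord s)) j)
            (R.obj.map (hat X i' v) j w))) = 0
    rw [hin]; erw [TensorProduct.tmul_zero, map_zero]
  · intro h; exact absurd (Finset.mem_univ i') h


/-- The comparison natural transformation `F_{Q_R} ⟶ R`. -/
noncomputable def alphaNatT (R : EndCat k I) : (FEnd (QR R)).obj ⟶ R.obj where
  app := alphaApp R
  naturality {X Y} f := by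
    funext j
    refine homL.injective ?_
    refine DirectSum.linearMap_ext k fun i => TensorProduct.ext' fun v w => ?_
    show alphaApp R Y j (Fmap (QR R) f j (DirectSum.lof k I _ i (v ⊗ₜ w)))
      = (R.obj.map f) j (alphaApp R X j (DirectSum.lof k I _ i (v ⊗ₜ w)))
    rw [Fmap_lof, alphaApp_lof, alphaApp_lof]
    have e2 : R.obj.map (hat X i v) ≫ R.obj.map f = R.obj.map (hat Y i (f i v)) := by
      rw [← Functor.map_comp, hat_comp]
    rw [← e2]
    rfl

/-- The comparison natural transformation `F_{Q_R} ⟶ R`. -/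
noncomputable def alphaNat (R : EndCat k I) : (FEnd (QR R) : EndCat k I) ⟶ R :=
  ObjectProperty.homMk (alphaNatT R)

noncomputable def alphaEquiv (R : EndCat k I) (X : GradedVect k I) (j : I) :
    (Fobj (QR R) X j : Type u) ≃ₗ[k] R.obj.obj X j :=
  LinearEquiv.ofLinear (asLin (alphaApp R X j)) (betaApp R X j)
    (alpha_beta R X j) (beta_alpha R X j)

/-- `alphaNat` viewed in the functor category. -/
noncomputable def alphaNat' (R : EndCat k I) :
    (Ffun (QR R) : GradedVect k I ⥤ GradedVect k I) ⟶ R.obj := alphaNatT R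

lemma isIso_alphaApp (R : EndCat k I) (X : GradedVect k I) :
    IsIso ((alphaNat' R).app X) := by
  refine ⟨⟨fun j => (toHom (alphaEquiv R X j).symm.toLinearMap :
      R.obj.obj X j ⟶ Fobj (QR R) X j), ?_, ?_⟩⟩
  · funext j
    ext x
    show (alphaEquiv R X j).symm (alphaEquiv R X j x) = x
    exact (alphaEquiv R X j).symm_apply_apply x
  · funext j
    ext x
    show (alphaEquiv R X j) ((alphaEquiv R X j).symm x) = x
    exact (alphaEquiv R X j).apply_symm_apply x

/-- The comparison isomorphism in the functor category. -/
noncomputable def alphaIso (R : EndCat k I) :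
    (Ffun (QR R) : GradedVect k I ⥤ GradedVect k I) ≅ R.obj := by
  haveI : ∀ X, IsIso ((alphaNat' R).app X) := isIso_alphaApp R
  haveI : IsIso (alphaNat' R) := NatIso.isIso_of_isIso_app _
  exact asIso (alphaNat' R)

/-- The comparison isomorphism `F_{Q_R} ≅ R` in `EndCat`. -/
noncomputable def endIso (R : EndCat k I) : (FEnd (QR R) : EndCat k I) ≅ R where
  hom := ObjectProperty.homMk (alphaIso R).hom
  inv := ObjectProperty.homMk (alphaIso R).inv
  hom_inv_id := InducedCategory.hom_ext (alphaIso R).hom_inv_id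
  inv_hom_id := InducedCategory.hom_ext (alphaIso R).inv_hom_id

/-- The unit isomorphism `𝟭 ≅ T ⋙ S`. -/
noncomputable def unitIso : 𝟭 (QuivCat k I) ≅ Tfun (k := k) (I := I) ⋙ Sfun := by
  refine NatIso.ofComponents
    (fun Q => quivIso (fun i j => (unitEquiv Q i j).symm)) ?_
  intro Q P φ
  funext i j
  show (quivIso (fun i j => (unitEquiv P i j).symm)).hom i j ≫ φ i j
    = Gmap φ (simpleAt k I i) j ≫ (quivIso (fun i j => (unitEquiv Q i j).symm)).hom i j
  refine homL.injective ?_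
  refine DirectSum.linearMap_ext k fun i'' => TensorProduct.ext' fun v q => ?_
  show φ i j (unitEquiv P i j (DirectSum.lof k I _ i'' (v ⊗ₜ q)))
    = unitEquiv Q i j (Gmap φ (simpleAt k I i) j (DirectSum.lof k I _ i'' (v ⊗ₜ q)))
  rw [Gmap_lof]
  by_cases h : i'' = i
  · subst h
    rw [unitEquiv_lof_same, unitEquiv_lof_same, map_smul]
  · rw [unitEquiv_lof_ne P i j h, unitEquiv_lof_ne Q i j h, map_zero]

/-- The counit isomorphism (in the form `𝟭 ≅ S ⋙ T`). -/
noncomputable def preCounitIso : 𝟭 (EndCat k I)ᵒᵖ ≅ Sfun (k := k) (I := I) ⋙ Tfun := by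
  refine NatIso.ofComponents (fun R => (endIso R.unop).op) ?_
  intro R R' θ
  refine Quiver.Hom.unop_inj ?_
  show alphaNat R'.unop ≫ θ.unop = Gnat (Sfun.map θ) ≫ alphaNat R.unop
  refine InducedCategory.hom_ext ?_
  refine NatTrans.ext ?_
  funext X j
  refine homL.injective ?_
  refine DirectSum.linearMap_ext k fun i => TensorProduct.ext' fun v w => ?_
  show θ.unop.hom.app X j (alphaApp R'.unop X j (DirectSum.lof k I _ i (v ⊗ₜ w)))
    = alphaApp R.unop X j (Gmap (Sfun.map θ) X j (DirectSum.lof k I _ i (v ⊗ₜ w)))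
  rw [alphaApp_lof]
  erw [Gmap_lof (Sfun.map θ) X j i v w]
  erw [alphaApp_lof]
  have e2 : R'.unop.obj.map (hat X i v) ≫ θ.unop.hom.app X
      = θ.unop.hom.app (simpleAt k I i) ≫ R.unop.obj.map (hat X i v) :=
    θ.unop.hom.naturality (hat X i v)
  show ((R'.unop.obj.map (hat X i v) ≫ θ.unop.hom.app X) j) w = _
  rw [e2]
  rfl

/-- The equivalence `Quiv_I ≌ (End_k M)ᵒᵖ`. -/
noncomputable def mainEquiv : QuivCat k I ≌ (EndCat k I)ᵒᵖ :=
  CategoryTheory.Equivalence.mk Tfun Sfun unitIso preCounitIso.symm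

/-- Identification of the inverse functor with `quiverOf`. -/
noncomputable def inverseIso (R : EndCat k I) :
    (Sfun (k := k) (I := I)).obj (Opposite.op R) ≅ quiverOf k I R :=
  quivIso fun i j =>
    (Module.evalEquiv k (R.obj.obj (simpleAt k I i) j)).trans
      (homToSimple (R.obj.obj (simpleAt k I i)) j).dualMap

lemma endofunctorValueAt_sub (Q : QuivCat k I) (i j' : I) :
    ∀ jj, jj ≠ j' → Subsingleton (TensorProduct k (Q i jj) ((simpleAt k I jj) j')) := by
  intro jj h
  haveI := simpleAt_subsingleton (k := k) (I := I) (Ne.symm h)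
  infer_instance

/-- Identification of the value of `F_Q` on simples with `endofunctorValueAt`. -/
noncomputable def valueIso (Q : QuivCat k I) (i : I) :
    Fobj Q (simpleAt k I i) ≅ endofunctorValueAt k I Q i :=
  gradedIso fun j' =>
    (unitEquiv Q i j').trans
      (((directSumEquivAt (k := k) j' (endofunctorValueAt_sub Q i j')).trans
        ((TensorProduct.congr (LinearEquiv.refl k (Q i j'))
          (castEquiv (simpleAt_self j'))).trans (TensorProduct.rid k (Q i j')))).symm)

end Stmt16

/-- For an algebraically closed field `k` and a finite vertex set `I`, there is an equivalence
of categories `Quiv_I ≃ (End_k(M))^op` which sends a `k`-linear endofunctor `R : M ⥤ M` to the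
quiver `Q(R)` with `Q(R)(i,j) = Hom_M(R(x_i), x_j)^∗`, and which in the reverse direction
sends a quiver `Q` to an endofunctor `R(Q)` with `R(Q)(x_i) ≅ ⊕_j Q(i,j) ⊗_k x_j`. -/
theorem quivCat_equivalence_endofunctors [IsAlgClosed k] :
    ∃ E : QuivCat k I ≌ (EndCat k I)ᵒᵖ,
      (∀ R : EndCat k I, Nonempty (E.inverse.obj (Opposite.op R) ≅ quiverOf k I R)) ∧
      (∀ (Q : QuivCat k I) (i : I),
        Nonempty (((E.functor.obj Q).unop.obj).obj (simpleAt k I i)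
          ≅ endofunctorValueAt k I Q i)) := by
  refine ⟨Stmt16.mainEquiv, fun R => ⟨Stmt16.inverseIso R⟩, fun Q i => ⟨Stmt16.valueIso Q i⟩⟩
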